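/- Let d, ω > 0 and A ∈ ℝ, and let r : ℝ → ℝ be given by r(t) = A·sin(ω t). Then for all x ∈ ℝ and t ∈ ℝ, the series Σ_{i=0}^∞ r^{(i)}(t)·x^{2i}/(d^i·(2i)!) converges absolutely and its sum equals (A/2)·e^{x·√(ω/(2d))}·sin( ω t + x·√(ω/(2d)) ) + (A/2)·e^{−x·√(ω/(2d))}·sin( ω t − x·√(ω/(2d)) ). -/

import Mathlib

open Real Complex


/-- For the sinusoidal reference `r(t) = A·sin(ωt)` (`d, ω > 0`), the
flatness-based series `Σ_i r^{(i)}(t) x^{2i}/(dⁱ(2i)!)` converges absolutely for all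
`x, t ∈ ℝ` and sums to the analytic reference profile
`(A/2)·e^{x√(ω/(2d))}·sin(ωt + x√(ω/(2d))) + (A/2)·e^{−x√(ω/(2d))}·sin(ωt − x√(ω/(2d)))`. -/
lemma itder_sin (A ω : ℝ) : ∀ i : ℕ, iteratedDeriv i (fun s => A * Real.sin (ω * s)) =
    fun t => A * ω ^ i * Real.sin (ω * t + i * (π / 2)) := by
  intro i
  induction i with
  | zero => funext t; simp
  | succ i ih =>
    funext t
    rw [iteratedDeriv_succ, ih]
    have h1 : HasDerivAt (fun t : ℝ => ω * t + (i : ℝ) * (π / 2)) ω t := by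
      simpa using ((hasDerivAt_id t).const_mul ω).add_const ((i : ℝ) * (π / 2))
    have h2 : HasDerivAt (fun t : ℝ => A * ω ^ i * Real.sin (ω * t + (i : ℝ) * (π / 2)))
        (A * ω ^ i * (Real.cos (ω * t + (i : ℝ) * (π / 2)) * ω)) t :=
      ((Real.hasDerivAt_sin _).comp t h1).const_mul _
    rw [h2.deriv]
    push_cast
    rw [show ω * t + ((i : ℝ) + 1) * (π / 2) = (ω * t + (i : ℝ) * (π / 2)) + π / 2 by ring,
      Real.sin_add_pi_div_two]
    ring

theorem statement15 (d ω A : ℝ) (hd : 0 < d) (hω : 0 < ω) :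
    ∀ x t : ℝ,
      (Summable fun i : ℕ =>
        |iteratedDeriv i (fun s => A * Real.sin (ω * s)) t * x ^ (2 * i) /
          (d ^ i * ((2 * i).factorial : ℝ))|) ∧
      ∑' i : ℕ, iteratedDeriv i (fun s => A * Real.sin (ω * s)) t * x ^ (2 * i) /
          (d ^ i * ((2 * i).factorial : ℝ)) =
        A / 2 * Real.exp (x * Real.sqrt (ω / (2 * d))) *
            Real.sin (ω * t + x * Real.sqrt (ω / (2 * d))) +
          A / 2 * Real.exp (-(x * Real.sqrt (ω / (2 * d)))) *
            Real.sin (ω * t - x * Real.sqrt (ω / (2 * d))) := by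
  intro x t
  set c : ℝ := x * Real.sqrt (ω / (2 * d)) with hc
  have hq : 2 * c ^ 2 = ω * x ^ 2 / d := by
    have : Real.sqrt (ω / (2 * d)) ^ 2 = ω / (2 * d) :=
      Real.sq_sqrt (by positivity)
    rw [hc, mul_pow, this]; field_simp
  set q : ℝ := ω * x ^ 2 / d with hqdef
  have hq0 : 0 ≤ q := by positivity
  have hqi : ∀ i : ℕ, q ^ i = ω ^ i * x ^ (2 * i) / d ^ i := by
    intro i
    rw [hqdef, div_pow, mul_pow, ← pow_mul]
  have hd0 : d ≠ 0 := ne_of_gt hd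
  -- rewrite the general term
  have hterm : ∀ i : ℕ, iteratedDeriv i (fun s => A * Real.sin (ω * s)) t * x ^ (2 * i) /
      (d ^ i * ((2 * i).factorial : ℝ)) =
      (A * Real.sin (ω * t + i * (π / 2))) * (q ^ i / ((2 * i).factorial : ℝ)) := by
    intro i
    rw [itder_sin, hqi]
    have hF : ((2 * i).factorial : ℝ) ≠ 0 := Nat.cast_ne_zero.2 (2 * i).factorial_ne_zero
    field_simp
  have hSum : Summable fun i : ℕ =>
      |iteratedDeriv i (fun s => A * Real.sin (ω * s)) t * x ^ (2 * i) /
        (d ^ i * ((2 * i).factorial : ℝ))| := by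
    have hmaj : Summable fun i : ℕ => |A| * (q ^ i / (i.factorial : ℝ)) :=
      (Real.summable_pow_div_factorial q).mul_left |A|
    refine Summable.of_nonneg_of_le (fun i => abs_nonneg _) (fun i => ?_) hmaj
    rw [hterm i, abs_mul]
    rw [_root_.abs_of_nonneg (by positivity : (0:ℝ) ≤ q ^ i / ((2 * i).factorial : ℝ))]
    have h1 : |A * Real.sin (ω * t + i * (π / 2))| ≤ |A| := by
      rw [abs_mul]
      calc |A| * |Real.sin (ω * t + i * (π / 2))| ≤ |A| * 1 :=
            mul_le_mul_of_nonneg_left (Real.abs_sin_le_one _) (abs_nonneg A)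
        _ = |A| := mul_one _
    have h2 : q ^ i / ((2 * i).factorial : ℝ) ≤ q ^ i / (i.factorial : ℝ) := by
      gcongr
      omega
    exact mul_le_mul h1 h2 (by positivity) (abs_nonneg A)
  refine ⟨hSum, ?_⟩
  set w : ℂ := (c : ℂ) + (c : ℂ) * Complex.I with hw
  have hw2 : w ^ 2 = (q : ℂ) * Complex.I := by
    rw [hw, ← hq]
    push_cast
    linear_combination (c : ℂ) ^ 2 * Complex.I_sq
  have hs : HasSum (fun n : ℕ => ((q : ℂ) * Complex.I) ^ n / ((2 * n).factorial : ℂ))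
      (Complex.cosh w) := by
    have h := Complex.hasSum_cos (w * Complex.I)
    rw [Complex.cos_mul_I] at h
    convert h using 2 with n
    rw [← hw2, ← pow_mul]
    have h' : ((-1 : ℂ)) ^ n * (w * Complex.I) ^ (2 * n) = w ^ (2 * n) := by
      rw [mul_pow, pow_mul Complex.I, Complex.I_sq, mul_comm, mul_assoc, ← mul_pow]
      norm_num
    rw [h']
  set E : ℂ := (A : ℂ) * Complex.exp ((ω * t : ℝ) * Complex.I) with hE
  have hs2 : HasSum (fun n : ℕ => E * ((q : ℂ) * Complex.I) ^ n / ((2 * n).factorial : ℂ))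
      (E * Complex.cosh w) := by
    simpa [mul_div_assoc] using hs.mul_left E
  have hI : Complex.I = Complex.exp ((π / 2 : ℝ) * Complex.I) := by
    rw [Complex.exp_mul_I]
    push_cast
    simp
  have hIn : ∀ n : ℕ, (Complex.I : ℂ) ^ n = Complex.exp (((n : ℝ) * (π / 2) : ℝ) * Complex.I) := by
    intro n
    conv_lhs => rw [hI]
    rw [← Complex.exp_nat_mul]
    congr 1
    push_cast
    ring
  -- identify imaginary parts of the terms
  have himterm : ∀ n : ℕ, (E * ((q : ℂ) * Complex.I) ^ n / ((2 * n).factorial : ℂ)).im =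
      (A * Real.sin (ω * t + n * (π / 2))) * (q ^ n / ((2 * n).factorial : ℝ)) := by
    intro n
    have key : E * ((q : ℂ) * Complex.I) ^ n / ((2 * n).factorial : ℂ) =
        ((A * (q ^ n / ((2 * n).factorial : ℝ)) : ℝ) : ℂ) *
          Complex.exp (((ω * t + n * (π / 2) : ℝ) : ℂ) * Complex.I) := by
      rw [hE, mul_pow, hIn n]
      push_cast
      rw [add_mul, Complex.exp_add]
      ring
    rw [key]
    have : ((A * (q ^ n / ((2 * n).factorial : ℝ)) : ℝ) : ℂ).im = 0 := Complex.ofReal_im _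
    rw [Complex.mul_im, this, Complex.ofReal_re, Complex.exp_ofReal_mul_I_im,
      Complex.exp_ofReal_mul_I_re]
    ring
  have hs3 : HasSum (fun i : ℕ => iteratedDeriv i (fun s => A * Real.sin (ω * s)) t *
      x ^ (2 * i) / (d ^ i * ((2 * i).factorial : ℝ))) ((E * Complex.cosh w).im) := by
    have h4 := hs2.mapL Complex.imCLM
    refine HasSum.congr_fun h4 (fun i => ?_)
    simp only [Complex.imCLM_apply]
    rw [himterm i, hterm i]
  rw [hs3.tsum_eq, Real.sin_add, Real.sin_sub, hE, Complex.cosh, hw]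
  simp [Complex.mul_im, Complex.mul_re, Complex.add_im, Complex.add_re,
    Complex.exp_re, Complex.exp_im, Complex.div_im, Complex.div_re, Complex.normSq,
    Real.exp_neg]
  ring
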